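/- Let h(x,y,z) ∈ ℝ[x,y,z] be a polynomial of degree at most 2 in the variables x = (x₁,…,x_d), y = (y₁,…,y_u), z = (z₁,…,z_v) that is a sum of squares, and suppose that for every i ∈ {1,…,u} and j ∈ {1,…,v} the coefficient of the monomial y_i z_j in h is zero. Then there exist polynomials h₁ ∈ ℝ[x,y] and h₂ ∈ ℝ[x,z], each of degree at most 2 and each a sum of squares, such that h = h₁ + h₂. -/

import Mathlib

open MvPolynomial
open RealInnerProductSpace

section AuxPoly

variable {σ : Type*}

lemma aux_fdeg_add (a b : σ →₀ ℕ) :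
    Finsupp.degree (a + b) = Finsupp.degree a + Finsupp.degree b := by
  classical
  simp [Finsupp.degree_eq_weight_one, map_add]

lemma aux_fdeg_single (w : σ) (n : ℕ) : Finsupp.degree (Finsupp.single w n) = n := by
  classical
  simp [Finsupp.degree_eq_weight_one, Finsupp.weight_apply]

lemma aux_finsupp_deg_one (m : σ →₀ ℕ) (h : Finsupp.degree m = 1) :
    ∃ w, m = Finsupp.single w 1 := by
  classical
  have hne : m ≠ 0 := by
    intro h0; rw [h0] at h; simp at h
  obtain ⟨w, hw⟩ := Finsupp.ne_iff.mp hne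
  simp only [Finsupp.coe_zero, Pi.zero_apply] at hw
  have h1 : m w ≤ 1 := h ▸ Finsupp.le_degree w m
  have hmw : m w = 1 := le_antisymm h1 (Nat.one_le_iff_ne_zero.mpr hw)
  refine ⟨w, ?_⟩
  ext s
  rcases eq_or_ne s w with rfl | hs
  · simp [hmw]
  · simp only [Finsupp.single_apply, if_neg (Ne.symm hs)]
    by_contra hms
    have hms' : 1 ≤ m s := Nat.one_le_iff_ne_zero.mpr hms
    have : 2 ≤ Finsupp.degree m := by
      have hsub : ({w, s} : Finset σ) ⊆ m.support := by
        intro t ht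
        rcases Finset.mem_insert.mp ht with rfl | ht
        · exact Finsupp.mem_support_iff.mpr hw
        · rw [Finset.mem_singleton] at ht
          subst ht
          exact Finsupp.mem_support_iff.mpr hms
      have h2 : m w + m s ≤ Finsupp.degree m := by
        rw [Finsupp.degree, ← Finset.sum_pair (Ne.symm hs)]
        exact Finset.sum_le_sum_of_subset hsub
      omega
    omega

lemma aux_deg_support_le {p : MvPolynomial σ ℝ} {m : σ →₀ ℕ} (hm : m ∈ p.support) :
    Finsupp.degree m ≤ p.totalDegree := le_totalDegree hm

lemma aux_coeff_zero_of_deg_gt {p : MvPolynomial σ ℝ} {m : σ →₀ ℕ}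
    (h : p.totalDegree < Finsupp.degree m) : coeff m p = 0 :=
  coeff_eq_zero_of_totalDegree_lt h

lemma aux_support_deg_le_one {p : MvPolynomial σ ℝ} (hp : p.totalDegree ≤ 1) {m : σ →₀ ℕ}
    (hm : m ∈ p.support) : m = 0 ∨ ∃ w, m = Finsupp.single w 1 := by
  have h1 : Finsupp.degree m ≤ 1 := le_trans (aux_deg_support_le hm) hp
  interval_cases h : Finsupp.degree m
  · exact Or.inl ((Finsupp.degree_eq_zero_iff m).mp h)
  · exact Or.inr (aux_finsupp_deg_one m h)

lemma aux_not_mem_vars {p : MvPolynomial σ ℝ} (hp : p.totalDegree ≤ 1) {w : σ}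
    (hc : coeff (Finsupp.single w 1) p = 0) : w ∉ p.vars := by
  intro hw
  rw [mem_vars] at hw
  obtain ⟨m, hm, hwm⟩ := hw
  rcases aux_support_deg_le_one hp hm with rfl | ⟨w', rfl⟩
  · simp at hwm
  · have : w = w' := by
      have := Finsupp.mem_support_iff.mp hwm
      by_contra hne
      exact this (Finsupp.single_eq_of_ne' (Ne.symm hne))
    subst this
    exact (mem_support_iff.mp hm) hc

lemma aux_coeff_mul_pair {p q : MvPolynomial σ ℝ} (hp : p.totalDegree ≤ 1)
    (hq : q.totalDegree ≤ 1) {w₁ w₂ : σ} (hw : w₁ ≠ w₂) :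
    coeff (Finsupp.single w₁ 1 + Finsupp.single w₂ 1) (p * q) =
      coeff (Finsupp.single w₁ 1) p * coeff (Finsupp.single w₂ 1) q +
      coeff (Finsupp.single w₂ 1) p * coeff (Finsupp.single w₁ 1) q := by
  classical
  set e₁ := Finsupp.single w₁ 1 with he₁
  set e₂ := Finsupp.single w₂ 1 with he₂
  have hee : e₁ ≠ e₂ := by
    intro hcon
    have := DFunLike.congr_fun hcon w₁
    simp [he₁, he₂, Finsupp.single_apply, if_neg (Ne.symm hw)] at this
  have hdeg_n : Finsupp.degree (e₁ + e₂) = 2 := by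
    rw [aux_fdeg_add, he₁, he₂, aux_fdeg_single, aux_fdeg_single]
  rw [coeff_mul]
  have hsub : ({(e₁, e₂), (e₂, e₁)} : Finset ((σ →₀ ℕ) × (σ →₀ ℕ))) ⊆
      Finset.HasAntidiagonal.antidiagonal (e₁ + e₂) := by
    intro ab hab
    rcases Finset.mem_insert.mp hab with rfl | hab
    · simp [Finset.HasAntidiagonal.mem_antidiagonal]
    · rw [Finset.mem_singleton] at hab
      subst hab
      simp [Finset.HasAntidiagonal.mem_antidiagonal, add_comm]
  rw [← Finset.sum_subset hsub ?vanish]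
  · rw [Finset.sum_pair (by simp [hee, Prod.ext_iff])]
  case vanish =>
    intro ab hab hnot
    obtain ⟨a, b⟩ := ab
    rw [Finset.HasAntidiagonal.mem_antidiagonal] at hab
    have hdab : Finsupp.degree a + Finsupp.degree b = 2 := by
      rw [← aux_fdeg_add, hab, hdeg_n]
    rcases Nat.lt_or_ge (Finsupp.degree a) 2 with hda | hda
    · interval_cases h : Finsupp.degree a
      · have ha0 : a = 0 := (Finsupp.degree_eq_zero_iff a).mp h
        subst ha0
        rw [zero_add] at hab
        subst hab
        have : coeff (e₁ + e₂) q = 0 := aux_coeff_zero_of_deg_gt (by omega)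
        simp [this]
      · obtain ⟨t, rfl⟩ := aux_finsupp_deg_one a h
        have htmem : t = w₁ ∨ t = w₂ := by
          by_contra hcon
          push_neg at hcon
          have := DFunLike.congr_fun hab t
          simp [he₁, he₂, Finsupp.single_apply, if_neg (Ne.symm hcon.1),
            if_neg (Ne.symm hcon.2)] at this
        rcases htmem with rfl | rfl
        · have hb : b = e₂ := by
            have : e₁ + b = e₁ + e₂ := by rw [← he₁] at hab; rw [hab]
            exact add_left_cancel this
          subst hb
          exact absurd (Finset.mem_insert_self _ _) (by rw [← he₁] at hnot; exact hnot)
        · have hb : b = e₁ := by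
            have : e₂ + b = e₂ + e₁ := by rw [← he₂] at hab; rw [hab, add_comm]
            exact add_left_cancel this
          subst hb
          exact absurd (Finset.mem_insert.mpr (Or.inr (Finset.mem_singleton_self _)))
            (by rw [← he₂] at hnot; exact hnot)
    · have : coeff a p = 0 := aux_coeff_zero_of_deg_gt (by omega)
      simp [this]

lemma aux_sos_eq_zero {k : ℕ} {q : Fin k → MvPolynomial σ ℝ} (h : ∑ i, (q i) ^ 2 = 0) :
    ∀ i, q i = 0 := by
  intro i
  apply MvPolynomial.funext
  intro x
  have hx : ∑ j, (eval x (q j)) ^ 2 = 0 := by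
    have := congrArg (eval x) h
    simpa [map_sum] using this
  have := Finset.sum_eq_zero_iff_of_nonneg (fun j _ => sq_nonneg (eval x (q j))) |>.mp hx
    i (Finset.mem_univ i)
  simpa [pow_eq_zero_iff] using this

lemma aux_homog_sq {p : MvPolynomial σ ℝ} {D : ℕ} (hp : p.totalDegree ≤ D) :
    homogeneousComponent (2 * D) (p ^ 2) = (homogeneousComponent D p) ^ 2 := by
  classical
  ext m
  rw [coeff_homogeneousComponent]
  rw [pow_two, pow_two, coeff_mul, coeff_mul]
  split_ifs with hm
  · apply Finset.sum_congr rfl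
    rintro ⟨a, b⟩ hab
    rw [Finset.HasAntidiagonal.mem_antidiagonal] at hab
    have hdab : Finsupp.degree a + Finsupp.degree b = 2 * D := by
      rw [← aux_fdeg_add, hab]
      exact hm
    simp only [coeff_homogeneousComponent]
    rcases lt_trichotomy (Finsupp.degree a) D with hda | hda | hda
    · have hdb : D < Finsupp.degree b := by omega
      have : coeff b p = 0 := aux_coeff_zero_of_deg_gt (lt_of_le_of_lt hp hdb)
      simp [this]
    · have hdb : Finsupp.degree b = D := by omega
      simp [hda, hdb]
    · have : coeff a p = 0 := aux_coeff_zero_of_deg_gt (lt_of_le_of_lt hp hda)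
      simp [this]
  · symm
    apply Finset.sum_eq_zero
    rintro ⟨a, b⟩ hab
    rw [Finset.HasAntidiagonal.mem_antidiagonal] at hab
    simp only [coeff_homogeneousComponent]
    rcases eq_or_ne (Finsupp.degree a) D with hda | hda
    · rcases eq_or_ne (Finsupp.degree b) D with hdb | hdb
      · exfalso
        apply hm
        rw [← hab, aux_fdeg_add, hda, hdb]
        omega
      · simp [hdb]
    · simp [hda]

lemma aux_sos_deg_le {k : ℕ} {q : Fin k → MvPolynomial σ ℝ}
    (h : (∑ i, (q i) ^ 2).totalDegree ≤ 2) : ∀ i, (q i).totalDegree ≤ 1 := by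
  classical
  intro i
  by_contra hcon
  have hD2 : 2 ≤ Finset.univ.sup (fun j => (q j).totalDegree) := by
    have hle : (q i).totalDegree ≤ Finset.univ.sup (fun j => (q j).totalDegree) :=
      Finset.le_sup (f := fun j => (q j).totalDegree) (Finset.mem_univ i)
    omega
  set D := Finset.univ.sup (fun j => (q j).totalDegree) with hD
  have hk : (Finset.univ : Finset (Fin k)).Nonempty := ⟨i, Finset.mem_univ i⟩
  obtain ⟨i₀, -, hi₀⟩ := Finset.exists_mem_eq_sup Finset.univ hk
    (fun j => (q j).totalDegree)
  have hzero : ∑ j, (homogeneousComponent D (q j)) ^ 2 = 0 := by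
    have h0 : homogeneousComponent (2 * D) (∑ j, (q j) ^ 2) = 0 := by
      apply homogeneousComponent_eq_zero
      omega
    rw [map_sum] at h0
    rw [← h0]
    apply Finset.sum_congr rfl
    intro j _
    exact (aux_homog_sq (Finset.le_sup (f := fun j => (q j).totalDegree)
      (Finset.mem_univ j))).symm
  have hqi₀ : homogeneousComponent D (q i₀) = 0 := aux_sos_eq_zero hzero i₀
  have hne : q i₀ ≠ 0 := by
    intro h0
    rw [h0] at hi₀
    rw [totalDegree_zero] at hi₀
    omega
  obtain ⟨m, hm, hmdeg⟩ := Finset.exists_mem_eq_sup (q i₀).support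
    (support_nonempty.mpr hne) (fun s => Finsupp.sum s fun _ e => e)
  have hdm : Finsupp.degree m = D := by
    rw [hD, hi₀, totalDegree, hmdeg]
    rfl
  have hcm : coeff m (homogeneousComponent D (q i₀)) = coeff m (q i₀) := by
    rw [coeff_homogeneousComponent, if_pos hdm]
  rw [hqi₀] at hcm
  simp only [coeff_zero] at hcm
  exact (mem_support_iff.mp hm) hcm.symm

/-- Key algebraic identity: splitting a sum of squares via a symmetric idempotent matrix. -/
lemma aux_sum_sq_split {k : ℕ} (q : Fin k → MvPolynomial σ ℝ) (M : Fin k → Fin k → ℝ)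
    (hsym : ∀ i j, M i j = M j i) (hidem : ∀ i j, ∑ l, M i l * M l j = M i j) :
    (∑ i, (∑ j, M i j • q j) ^ 2) + (∑ i, (q i - ∑ j, M i j • q j) ^ 2) = ∑ i, (q i) ^ 2 := by
  set r : Fin k → MvPolynomial σ ℝ := fun i => ∑ j, M i j • q j with hr
  have hA : ∑ i, (r i) ^ 2 = ∑ j, ∑ l, M j l • (q j * q l) := by
    have hr2 : ∀ i, (r i) ^ 2 = ∑ j, ∑ l, (M i j * M i l) • (q j * q l) := by
      intro i
      rw [sq, hr, Finset.sum_mul_sum]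
      refine Finset.sum_congr rfl fun j _ => Finset.sum_congr rfl fun l _ => ?_
      rw [smul_mul_smul_comm]
    calc ∑ i, (r i) ^ 2 = ∑ i, ∑ j, ∑ l, (M i j * M i l) • (q j * q l) :=
          Finset.sum_congr rfl fun i _ => hr2 i
      _ = ∑ j, ∑ i, ∑ l, (M i j * M i l) • (q j * q l) := Finset.sum_comm
      _ = ∑ j, ∑ l, ∑ i, (M i j * M i l) • (q j * q l) :=
          Finset.sum_congr rfl fun j _ => Finset.sum_comm
      _ = ∑ j, ∑ l, M j l • (q j * q l) := by
          refine Finset.sum_congr rfl fun j _ => Finset.sum_congr rfl fun l _ => ?_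
          rw [← Finset.sum_smul]
          congr 1
          calc ∑ i, M i j * M i l = ∑ i, M j i * M i l :=
                Finset.sum_congr rfl fun i _ => by rw [hsym i j]
            _ = M j l := hidem j l
  have hB : ∑ i, q i * r i = ∑ j, ∑ l, M j l • (q j * q l) := by
    refine Finset.sum_congr rfl fun j _ => ?_
    rw [hr, Finset.mul_sum]
    refine Finset.sum_congr rfl fun l _ => ?_
    rw [mul_smul_comm]
  have key : ∑ i, q i * r i = ∑ i, (r i) ^ 2 := by rw [hA, hB]
  have expand : ∀ i, (q i - r i) ^ 2 = (q i) ^ 2 - 2 * (q i * r i) + (r i) ^ 2 :=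
    fun i => by ring
  calc (∑ i, (r i) ^ 2) + ∑ i, (q i - r i) ^ 2
      = (∑ i, (r i) ^ 2) + ∑ i, ((q i) ^ 2 - 2 * (q i * r i) + (r i) ^ 2) := by
        rw [Finset.sum_congr rfl fun i _ => expand i]
    _ = (∑ i, (r i) ^ 2) + ((∑ i, (q i) ^ 2) - 2 * (∑ i, q i * r i) + ∑ i, (r i) ^ 2) := by
        rw [Finset.sum_add_distrib, Finset.sum_sub_distrib, ← Finset.mul_sum]
    _ = ∑ i, (q i) ^ 2 := by rw [key]; ring

end AuxPoly

noncomputable section AuxProj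

open RealInnerProductSpace

variable {k : ℕ}

/-- Orthogonal projection onto `Wᗮ` as a linear endomorphism. -/
def auxProj (W : Submodule ℝ (EuclideanSpace ℝ (Fin k))) :
    EuclideanSpace ℝ (Fin k) →ₗ[ℝ] EuclideanSpace ℝ (Fin k) :=
  (Wᗮ.subtypeL ∘L Wᗮ.orthogonalProjectionOnto :
    EuclideanSpace ℝ (Fin k) →L[ℝ] EuclideanSpace ℝ (Fin k)).toLinearMap

lemma auxProj_symm (W : Submodule ℝ (EuclideanSpace ℝ (Fin k)))
    (x y : EuclideanSpace ℝ (Fin k)) : ⟪auxProj W x, y⟫ = ⟪x, auxProj W y⟫ :=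
  Submodule.starProjection_isSymmetric (K := Wᗮ) x y

lemma auxProj_mem (W : Submodule ℝ (EuclideanSpace ℝ (Fin k))) (x : EuclideanSpace ℝ (Fin k))
    (hx : x ∈ Wᗮ) : auxProj W x = x := by
  exact (Submodule.starProjection_eq_self_iff (K := Wᗮ)).mpr hx

lemma auxProj_idem (W : Submodule ℝ (EuclideanSpace ℝ (Fin k))) (x : EuclideanSpace ℝ (Fin k)) :
    auxProj W (auxProj W x) = auxProj W x :=
  auxProj_mem W _ (Submodule.coe_mem _)

lemma auxProj_zero (W : Submodule ℝ (EuclideanSpace ℝ (Fin k))) (x : EuclideanSpace ℝ (Fin k))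
    (hx : x ∈ W) : auxProj W x = 0 := by
  have : x ∈ Wᗮᗮ := W.le_orthogonal_orthogonal hx
  simp [auxProj, Submodule.orthogonalProjectionOnto_apply_of_mem_orthogonal this]

lemma aux_inner_eq (x y : EuclideanSpace ℝ (Fin k)) : ⟪x, y⟫ = ∑ i, x i * y i := by
  simp [PiLp.inner_apply, mul_comm]

lemma auxProj_apply_eq_sum (W : Submodule ℝ (EuclideanSpace ℝ (Fin k)))
    (x : EuclideanSpace ℝ (Fin k)) (i : Fin k) :
    auxProj W x i = ∑ j, auxProj W (EuclideanSpace.single j 1) i * x j := by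
  have hx : x = ∑ j, x j • EuclideanSpace.single j (1:ℝ) := by
    ext t
    rw [WithLp.ofLp_sum, Finset.sum_apply]
    simp [EuclideanSpace.single_apply, PiLp.smul_apply]
  conv_lhs => rw [hx]
  rw [map_sum, WithLp.ofLp_sum, Finset.sum_apply]
  simp only [map_smul, PiLp.smul_apply, smul_eq_mul]
  exact Finset.sum_congr rfl fun j _ => mul_comm _ _

lemma auxProj_entry_symm (W : Submodule ℝ (EuclideanSpace ℝ (Fin k))) (i j : Fin k) :
    auxProj W (EuclideanSpace.single j 1) i = auxProj W (EuclideanSpace.single i 1) j := by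
  have h1 : auxProj W (EuclideanSpace.single j 1) i =
      ⟪auxProj W (EuclideanSpace.single j 1), EuclideanSpace.single i 1⟫ := by
    simp [aux_inner_eq, EuclideanSpace.single_apply]
  have h2 : auxProj W (EuclideanSpace.single i 1) j =
      ⟪EuclideanSpace.single j 1, auxProj W (EuclideanSpace.single i 1)⟫ := by
    simp [aux_inner_eq, EuclideanSpace.single_apply]
  rw [h1, h2, auxProj_symm]

end AuxProj

/-- A polynomial is a sum of squares. -/
def IsSOS {σ : Type*} (p : MvPolynomial σ ℝ) : Prop :=
  ∃ (k : ℕ) (q : Fin k → MvPolynomial σ ℝ), p = ∑ i, (q i) ^ 2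

/-- Splitting lemma: a quadratic SOS polynomial `h(x,y,z)` with no mixed
`yᵢ zⱼ` monomials is a sum `h = h₁ + h₂` of a quadratic SOS polynomial
`h₁ ∈ ℝ[x,y]` and a quadratic SOS polynomial `h₂ ∈ ℝ[x,z]`. -/
theorem sos_split (d u v : ℕ)
    (h : MvPolynomial (Fin d ⊕ Fin u ⊕ Fin v) ℝ)
    (hdeg : h.totalDegree ≤ 2) (hsos : IsSOS h)
    (hmixed : ∀ (i : Fin u) (j : Fin v),
      MvPolynomial.coeff
        (Finsupp.single (Sum.inr (Sum.inl i)) 1 + Finsupp.single (Sum.inr (Sum.inr j)) 1)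
        h = 0) :
    ∃ h₁ h₂ : MvPolynomial (Fin d ⊕ Fin u ⊕ Fin v) ℝ,
      (∀ w ∈ h₁.vars, ∀ j : Fin v, w ≠ Sum.inr (Sum.inr j)) ∧
      (∀ w ∈ h₂.vars, ∀ i : Fin u, w ≠ Sum.inr (Sum.inl i)) ∧
      h₁.totalDegree ≤ 2 ∧ h₂.totalDegree ≤ 2 ∧
      IsSOS h₁ ∧ IsSOS h₂ ∧ h = h₁ + h₂ := by
  classical
  obtain ⟨k, q, hq⟩ := hsos
  have hq1 : ∀ i, (q i).totalDegree ≤ 1 := aux_sos_deg_le (hq ▸ hdeg)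
  -- coefficient vectors of the y and z variables
  set Bv : Fin u → EuclideanSpace ℝ (Fin k) := fun i' =>
    WithLp.toLp 2 (fun l => coeff (Finsupp.single (Sum.inr (Sum.inl i') : Fin d ⊕ Fin u ⊕ Fin v) 1) (q l)) with hBv
  set Cv : Fin v → EuclideanSpace ℝ (Fin k) := fun j =>
    WithLp.toLp 2 (fun l => coeff (Finsupp.single (Sum.inr (Sum.inr j) : Fin d ⊕ Fin u ⊕ Fin v) 1) (q l)) with hCv
  set W : Submodule ℝ (EuclideanSpace ℝ (Fin k)) := Submodule.span ℝ (Set.range Cv) with hW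
  set M : Fin k → Fin k → ℝ := fun i j => auxProj W (EuclideanSpace.single j 1) i with hM
  -- B and C are orthogonal
  have hBC : ∀ (i' : Fin u) (j : Fin v), ∑ l, (Cv j) l * (Bv i') l = 0 := by
    intro i' j
    have hyz : (Sum.inr (Sum.inl i') : Fin d ⊕ Fin u ⊕ Fin v) ≠ Sum.inr (Sum.inr j) := by simp
    have hc : coeff (Finsupp.single (Sum.inr (Sum.inl i') : Fin d ⊕ Fin u ⊕ Fin v) 1 +
        Finsupp.single (Sum.inr (Sum.inr j) : Fin d ⊕ Fin u ⊕ Fin v) 1) h = 0 := hmixed i' j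
    rw [hq, coeff_sum] at hc
    have hterm : ∀ l : Fin k, coeff (Finsupp.single (Sum.inr (Sum.inl i') : Fin d ⊕ Fin u ⊕ Fin v) 1 +
        Finsupp.single (Sum.inr (Sum.inr j) : Fin d ⊕ Fin u ⊕ Fin v) 1) ((q l) ^ 2) =
        2 * ((Cv j) l * (Bv i') l) := by
      intro l
      rw [sq, aux_coeff_mul_pair (hq1 l) (hq1 l) hyz]
      simp only [hBv, hCv, PiLp.toLp_apply]
      ring
    rw [Finset.sum_congr rfl fun l _ => hterm l, ← Finset.mul_sum] at hc
    have := mul_eq_zero.mp hc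
    simpa using this
  have hBmem : ∀ i' : Fin u, Bv i' ∈ Wᗮ := by
    intro i'
    rw [Submodule.mem_orthogonal]
    intro x hx
    rw [hW] at hx
    induction hx using Submodule.span_induction with
    | mem x hxr =>
      obtain ⟨j, rfl⟩ := hxr
      rw [aux_inner_eq]
      exact hBC i' j
    | zero => exact inner_zero_left _
    | add x y hx hy ihx ihy => rw [inner_add_left, ihx, ihy, add_zero]
    | smul a x hx ihx => rw [inner_smul_left, ihx, mul_zero]
  have hPB : ∀ i' : Fin u, auxProj W (Bv i') = Bv i' := fun i' => auxProj_mem W _ (hBmem i')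
  have hPC : ∀ j : Fin v, auxProj W (Cv j) = 0 := fun j =>
    auxProj_zero W _ (Submodule.subset_span ⟨j, rfl⟩)
  -- matrix properties
  have hsym : ∀ i j, M i j = M j i := fun i j => auxProj_entry_symm W i j
  have hidem : ∀ i j, ∑ l, M i l * M l j = M i j := by
    intro i j
    have := auxProj_apply_eq_sum W (auxProj W (EuclideanSpace.single j 1)) i
    rw [auxProj_idem] at this
    exact this.symm
  -- the two pieces
  set r : Fin k → MvPolynomial (Fin d ⊕ Fin u ⊕ Fin v) ℝ := fun i => ∑ j, M i j • q j with hrdef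
  set s : Fin k → MvPolynomial (Fin d ⊕ Fin u ⊕ Fin v) ℝ := fun i => q i - r i with hsdef
  have hr_coeff : ∀ (i : Fin k) (m : (Fin d ⊕ Fin u ⊕ Fin v) →₀ ℕ), coeff m (r i) = ∑ j, M i j * coeff m (q j) := by
    intro i m
    rw [hrdef]
    simp only [coeff_sum, coeff_smul, smul_eq_mul]
  have hr_deg : ∀ i, (r i).totalDegree ≤ 1 := by
    intro i
    exact totalDegree_finsetSum_le fun j _ => le_trans (totalDegree_smul_le _ _) (hq1 j)
  have hs_deg : ∀ i, (s i).totalDegree ≤ 1 := by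
    intro i
    exact le_trans (totalDegree_sub _ _) (max_le (hq1 i) (hr_deg i))
  -- r has no z variables
  have hrz : ∀ (i : Fin k) (j : Fin v),
      coeff (Finsupp.single (Sum.inr (Sum.inr j) : Fin d ⊕ Fin u ⊕ Fin v) 1) (r i) = 0 := by
    intro i j
    rw [hr_coeff]
    have := auxProj_apply_eq_sum W (Cv j) i
    rw [hPC j] at this
    have h0 : (0 : EuclideanSpace ℝ (Fin k)) i = 0 := rfl
    rw [h0] at this
    rw [← this]
  -- s has no y variables
  have hsy : ∀ (i : Fin k) (i' : Fin u),
      coeff (Finsupp.single (Sum.inr (Sum.inl i') : Fin d ⊕ Fin u ⊕ Fin v) 1) (s i) = 0 := by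
    intro i i'
    rw [hsdef]
    simp only [coeff_sub]
    rw [hr_coeff]
    have := auxProj_apply_eq_sum W (Bv i') i
    rw [hPB i'] at this
    rw [← this]
    simp [hBv]
  refine ⟨∑ i, (r i) ^ 2, ∑ i, (s i) ^ 2, ?_, ?_, ?_, ?_, ⟨k, r, rfl⟩, ⟨k, s, rfl⟩, ?_⟩
  · intro w hw j hwj
    subst hwj
    have := vars_sum_subset Finset.univ (fun i => (r i) ^ 2) hw
    obtain ⟨i, -, hi⟩ := Finset.mem_biUnion.mp this
    exact aux_not_mem_vars (hr_deg i) (hrz i j) (vars_pow _ _ hi)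
  · intro w hw i' hwi'
    subst hwi'
    have := vars_sum_subset Finset.univ (fun i => (s i) ^ 2) hw
    obtain ⟨i, -, hi⟩ := Finset.mem_biUnion.mp this
    exact aux_not_mem_vars (hs_deg i) (hsy i i') (vars_pow _ _ hi)
  · refine totalDegree_finsetSum_le fun i _ => le_trans (totalDegree_pow _ _) ?_
    have := hr_deg i
    omega
  · refine totalDegree_finsetSum_le fun i _ => le_trans (totalDegree_pow _ _) ?_
    have := hs_deg i
    omega
  · rw [hq]
    exact (aux_sum_sq_split q M hsym hidem).symm
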